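/- Let E ⊆ ℂ be a number field with E ⊄ ℝ and E closed under complex conjugation. Then E ∩ S¹ (elements of E of absolute value 1) is dense in the unit circle S¹. -/

import Mathlib

/-- If `E ⊆ ℂ` is a number field, not contained in `ℝ`, and stable under complex
conjugation, then the elements of `E` of absolute value `1` are dense in the unit circle. -/
theorem stmt2 (E : IntermediateField ℚ ℂ) [FiniteDimensional ℚ E]
    (hER : ¬ (E : Set ℂ) ⊆ Set.range Complex.ofReal)
    (hconj : ∀ z ∈ E, (starRingEnd ℂ) z ∈ E) :
    ∀ z : ℂ, ‖z‖ = 1 →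
      z ∈ closure {w : ℂ | w ∈ E ∧ ‖w‖ = 1} := by
  rw [Set.not_subset] at hER
  obtain ⟨α, hαE, hαR⟩ := hER
  have him : α.im ≠ 0 := by
    intro h
    exact hαR ⟨α.re, by apply Complex.ext <;> simp [h]⟩
  set u : ℂ := α - starRingEnd ℂ α with hu
  have huE : u ∈ E := E.sub_mem hαE (hconj α hαE)
  have hure : u.re = 0 := by simp [hu]
  have huim : u.im = 2 * α.im := by simp [hu]; ring
  have hu0 : u ≠ 0 := by
    intro h
    apply him
    have := congrArg Complex.im h
    rw [huim] at this
    simpa using this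
  have hucon : starRingEnd ℂ u = -u := by
    apply Complex.ext <;> simp [hure]
  have hne : ∀ x : ℝ, (x : ℂ) - u ≠ 0 := by
    intro x h
    apply him
    have := congrArg Complex.im h
    simp [huim] at this
    simpa using this
  set S : Set ℂ := {w : ℂ | w ∈ E ∧ ‖w‖ = 1} with hS
  intro z hz
  by_cases hz1 : z = 1
  · subst hz1
    exact subset_closure ⟨E.one_mem, by simp⟩
  have hz0 : z ≠ 0 := by
    intro h; rw [h] at hz; simp at hz
  have hzsub : z - 1 ≠ 0 := sub_ne_zero.2 hz1
  have hzc : starRingEnd ℂ z = z⁻¹ := by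
    rw [Complex.inv_def, Complex.normSq_eq_norm_sq, hz]
    simp
  set w : ℂ := u * (1 + z) / (z - 1) with hw
  have hwc : starRingEnd ℂ w = w := by
    have hinv : z⁻¹ - 1 ≠ 0 := sub_ne_zero.2 (fun h => hz1 (inv_eq_one.1 h))
    rw [hw, map_div₀, map_mul, hucon, map_sub, map_add, map_one, hzc,
      div_eq_div_iff hinv hzsub]
    field_simp
    ring
  have hwre : w = (w.re : ℂ) := (Complex.conj_eq_iff_re.1 hwc).symm
  set f : ℝ → ℂ := fun x => ((x : ℂ) + u) / ((x : ℂ) - u) with hf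
  have hcont : Continuous f := by
    apply Continuous.div
    · exact (Complex.continuous_ofReal).add continuous_const
    · exact (Complex.continuous_ofReal).sub continuous_const
    · exact hne
  have hmaps : Set.MapsTo f (Set.range ((↑) : ℚ → ℝ)) S := by
    rintro x ⟨q, rfl⟩
    have hq : ((q : ℝ) : ℂ) ∈ E := by
      have : ((q : ℂ)) ∈ E := SubfieldClass.ratCast_mem E q
      simpa using this
    constructor
    · exact E.div_mem (E.add_mem hq huE) (E.sub_mem hq huE)
    · rw [hf]
      simp only [norm_div]
      rw [div_eq_one_iff_eq (by simpa using (norm_ne_zero_iff.2 (hne (q : ℝ))))]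
      rw [← Complex.norm_conj (((q:ℝ) : ℂ) + u)]
      congr 1
      rw [map_add, hucon, Complex.conj_ofReal, sub_eq_add_neg]
  have hrd : (w.re : ℝ) ∈ closure (Set.range ((↑) : ℚ → ℝ)) := Rat.denseRange_cast w.re
  have hkey := map_mem_closure hcont hrd hmaps
  have hfr : f w.re = z := by
    rw [hf]
    simp only
    rw [← hwre]
    have hwu : w - u = 2 * u / (z - 1) := by
      rw [hw]; field_simp; ring
    have hwu0 : w - u ≠ 0 := by
      rw [hwu]
      exact div_ne_zero (by simpa using hu0) hzsub
    rw [div_eq_iff hwu0, hw]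
    field_simp
    ring
  rwa [hfr] at hkey
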